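/- arXiv:1302.1626 — 4 statements merged into one kernel-verified Lean document; each statement's English description precedes it below -/
import Mathlib

section
/- Let G be a group of permutations of a finite set Ω, and let C ⊆ GF(2)^Ω be a self-orthogonal code invariant under G (i.e., σ·C = C for all σ ∈ G, where σ permutes coordinates). Define C(G,Ω) = ⟨Fix(σ) : σ an involution of G⟩⊥, where Fix(σ) ⊆ Ω is viewed as its indicator vector. Then C ⊆ C(G,Ω). -/
/-- The dual code of `C` w.r.t. the inner product `(x,y) = ∑ i, x i * y i` over `GF(2)`. -/
def dualCode {Ω : Type*} [Fintype Ω] (C : Submodule (ZMod 2) (Ω → ZMod 2)) :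
    Submodule (ZMod 2) (Ω → ZMod 2) where
  carrier := {y | ∀ x ∈ C, ∑ i, x i * y i = 0}
  zero_mem' := by intro x hx; simp
  add_mem' := by
    intro a b ha hb x hx
    simp [mul_add, Finset.sum_add_distrib, ha x hx, hb x hx]
  smul_mem' := by
    intro c y hy x hx
    simp only [Pi.smul_apply, smul_eq_mul, mul_left_comm, ← Finset.mul_sum]
    rw [hy x hx, mul_zero]

/-- The indicator vector in `GF(2)^Ω` of the fixed-point set of a permutation. -/
def fixInd {Ω : Type*} [DecidableEq Ω] (σ : Equiv.Perm Ω) : Ω → ZMod 2 :=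
  fun i => if σ i = i then 1 else 0

lemma fix_key {Ω : Type*} [Fintype Ω] [DecidableEq Ω] (σ : Equiv.Perm Ω)
    (hσ : σ ^ 2 = 1) (x : Ω → ZMod 2) :
    ∑ i, fixInd σ i * x i = ∑ i, x i * x (σ⁻¹ i) := by
  have hσσ : ∀ i, σ (σ i) = i := fun i => by
    have := congrArg (fun τ : Equiv.Perm Ω => τ i) hσ
    simpa [pow_succ, Equiv.Perm.mul_apply] using this
  have hσinv : σ⁻¹ = σ := inv_eq_of_mul_eq_one_right (by
    ext i; simp [Equiv.Perm.mul_apply, hσσ])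
  rw [hσinv]
  rw [← Finset.sum_filter_add_sum_filter_not Finset.univ (fun i => σ i = i)
    (fun i => x i * x (σ i))]
  have h1 : ∑ i ∈ Finset.univ.filter (fun i => σ i = i), x i * x (σ i)
      = ∑ i, fixInd σ i * x i := by
    rw [Finset.sum_filter]
    refine Finset.sum_congr rfl fun i _ => ?_
    have hsq : ∀ a : ZMod 2, a * a = a := by decide
    by_cases h : σ i = i
    · simp [h, fixInd, hsq (x i)]
    · simp [h, fixInd]
  have h2 : ∑ i ∈ Finset.univ.filter (fun i => ¬ σ i = i), x i * x (σ i) = 0 := by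
    refine Finset.sum_involution (fun a _ => σ a) ?_ ?_ ?_ ?_
    · intro a _
      have : ∀ b : ZMod 2, b + b = 0 := by decide
      rw [hσσ, mul_comm]; exact this _
    · intro a ha _
      simpa using (Finset.mem_filter.mp ha).2
    · intro a ha
      simp only [Finset.mem_filter, Finset.mem_univ, true_and] at ha ⊢
      intro h
      exact ha (by have := hσσ a; rw [h] at this; exact this)
    · intro a _; exact hσσ a
  rw [h1, h2, add_zero]

/-- Chigira–Harada–Kitazume: a `G`-invariant self-orthogonal code is contained in
`C(G,Ω) = ⟨Fix(σ) : σ an involution of G⟩⊥`. -/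
theorem selfOrthogonal_le_CGOmega {Ω : Type*} [Fintype Ω] [DecidableEq Ω]
    (G : Subgroup (Equiv.Perm Ω)) (C : Submodule (ZMod 2) (Ω → ZMod 2))
    (hso : C ≤ dualCode C)
    (hinv : ∀ σ ∈ G, ∀ x ∈ C, (fun i => x (σ⁻¹ i)) ∈ C) :
    C ≤ dualCode (Submodule.span (ZMod 2)
      {v | ∃ σ ∈ G, σ ^ 2 = 1 ∧ σ ≠ 1 ∧ v = fixInd σ}) := by
  intro x hx v hv
  induction hv using Submodule.span_induction with
  | mem v hv =>
    obtain ⟨σ, hσG, hσ2, -, rfl⟩ := hv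
    rw [fix_key σ hσ2 x]
    exact (Finset.sum_congr rfl fun i _ => mul_comm _ _).trans (hso hx _ (hinv σ hσG x hx))
  | zero => simp
  | add a b _ _ ha hb => simp [add_mul, Finset.sum_add_distrib, ha, hb]
  | smul c v _ hv =>
    simp only [Pi.smul_apply, smul_eq_mul, mul_assoc, ← Finset.mul_sum, hv, mul_zero]
end

section
/- Let σ be a permutation of order 2 of a finite set Ω, and let C ⊆ GF(2)^Ω be a self-orthogonal code invariant under σ. Then every codeword of C is orthogonal to the indicator vector of Fix(σ) = {x ∈ Ω : σ(x) = x}. -/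
/-- Every codeword of a self-orthogonal code invariant under an involution `σ` is orthogonal to
the indicator vector of `Fix(σ)`. -/
theorem codeword_orthogonal_fix {Ω : Type*} [Fintype Ω] [DecidableEq Ω]
    (σ : Equiv.Perm Ω) (h2 : σ ^ 2 = 1) (h1 : σ ≠ 1)
    (C : Submodule (ZMod 2) (Ω → ZMod 2)) (hso : C ≤ dualCode C)
    (hinv : ∀ x ∈ C, (fun i => x (σ⁻¹ i)) ∈ C) :
    ∀ c ∈ C, ∑ i, c i * fixInd σ i = 0 := by
  intro c hc
  have hinvσ : σ⁻¹ = σ := inv_eq_of_mul_eq_one_right (by rw [← sq, h2])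
  have hσσ : ∀ i, σ (σ i) = i := by
    intro i
    have := Equiv.ext_iff.mp h2 i
    simpa [sq, Equiv.Perm.mul_apply] using this
  have h0 : ∑ i, c i * c (σ i) = 0 := by
    have := hso hc _ (hinv c hc)
    simpa [hinvσ, mul_comm] using this
  have hms : ∀ x : ZMod 2, x * x = x := by decide
  have hsplit := Finset.sum_filter_add_sum_filter_not Finset.univ
    (fun i => σ i = i) (fun i => c i * c (σ i))
  have hA : ∑ i ∈ Finset.univ.filter (fun i => σ i = i), c i * c (σ i)
      = ∑ i ∈ Finset.univ.filter (fun i => σ i = i), c i := by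
    refine Finset.sum_congr rfl fun i hi => ?_
    rw [(Finset.mem_filter.mp hi).2, hms]
  have hB : ∑ i ∈ Finset.univ.filter (fun i => ¬ σ i = i), c i * c (σ i) = 0 := by
    refine Finset.sum_involution (fun i _ => σ i) ?_ ?_ ?_ ?_
    · intro i hi
      rw [hσσ, mul_comm]
      exact CharTwo.add_self_eq_zero _
    · intro i hi _
      exact (Finset.mem_filter.mp hi).2
    · intro i hi
      simp only [Finset.mem_filter, Finset.mem_univ, true_and] at hi ⊢
      rw [hσσ]
      exact fun h => hi h.symm
    · intro i hi
      exact hσσ i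
  have hfix : ∑ i, c i * fixInd σ i
      = ∑ i ∈ Finset.univ.filter (fun i => σ i = i), c i := by
    rw [Finset.sum_filter]
    refine Finset.sum_congr rfl fun i _ => ?_
    simp [fixInd, mul_ite]
  rw [hfix]
  have := hsplit.trans h0
  rw [hA, hB, add_zero] at this
  exact this
end

section
/- Let r, s be positive integers, T = GF(2^r)^{2s} viewed as a finite set, and G = T ⋊ SL(2s, GF(2^r)) acting on T with T acting by translations and SL(2s, GF(2^r)) acting linearly. Then there is no self-dual binary code of length 2^{2rs} (a subspace C ⊆ GF(2)^T with C = C⊥) invariant under G. -/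
lemma zmod2_mul_self (a : ZMod 2) : a * a = a := by revert a; decide

lemma zmod2_add_self (a : ZMod 2) : a + a = 0 := by revert a; decide

/-- For an involution `f`, the sum of `x` over the fixed points of `f` equals `⟨x, x∘f⟩`. -/
lemma sum_fixed_eq_pairing {Ω : Type*} [Fintype Ω] [DecidableEq Ω] (f : Ω → Ω)
    (hf : ∀ v, f (f v) = v) (x : Ω → ZMod 2) :
    ∑ i ∈ Finset.univ.filter (fun i => f i = i), x i = ∑ i, x i * x (f i) := by
  rw [← Finset.sum_filter_add_sum_filter_not Finset.univ (fun i => f i = i)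
    (fun i => x i * x (f i))]
  have h1 : ∑ i ∈ Finset.univ.filter (fun i => f i = i), x i * x (f i)
      = ∑ i ∈ Finset.univ.filter (fun i => f i = i), x i := by
    apply Finset.sum_congr rfl
    intro i hi
    rw [Finset.mem_filter] at hi
    rw [hi.2, zmod2_mul_self]
  have h2 : ∑ i ∈ Finset.univ.filter (fun i => ¬ f i = i), x i * x (f i) = 0 := by
    apply Finset.sum_involution (fun i _ => f i)
    · intro i hi
      simp only [hf]
      rw [mul_comm (x (f i))]
      exact zmod2_add_self _
    · intro i hi _
      rw [Finset.mem_filter] at hi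
      exact hi.2
    · intro i hi
      rw [Finset.mem_filter] at hi ⊢
      refine ⟨Finset.mem_univ _, fun h => hi.2 ?_⟩
      rw [hf] at h
      exact h.symm
    · intro i hi
      exact hf i
  rw [h1, h2, add_zero]

/-- `i ↦ i + s` (mod `2s`) on `Fin (2s)`. -/
def sshift (s : ℕ) (i : Fin (2 * s)) : Fin (2 * s) :=
  ⟨(i.1 + s) % (2 * s), Nat.mod_lt _ (by have := i.isLt; omega)⟩

/-- `i ↦ i - s` on `Fin (2s)`. -/
def sunshift (s : ℕ) (i : Fin (2 * s)) : Fin (2 * s) :=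
  ⟨i.1 - s, by have := i.isLt; omega⟩

lemma sshift_val {s : ℕ} (i : Fin (2 * s)) (h : i.1 < s) : (sshift s i).1 = i.1 + s :=
  Nat.mod_eq_of_lt (by omega)

/-- The transvection-like involution adding the lower half to the upper half. -/
def sigmaFun (s : ℕ) (F : Type*) [Field F] :
    (Fin (2 * s) → F) →ₗ[F] (Fin (2 * s) → F) where
  toFun v := fun i => v i + if i.1 < s then v (sshift s i) else 0
  map_add' v w := by funext i; simp only [Pi.add_apply]; split <;> ring
  map_smul' c v := by
    funext i
    simp only [Pi.smul_apply, smul_eq_mul, RingHom.id_apply]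
    split <;> ring

/-- The transvection-like involution adding the upper half to the lower half. -/
def tauFun (s : ℕ) (F : Type*) [Field F] :
    (Fin (2 * s) → F) →ₗ[F] (Fin (2 * s) → F) where
  toFun v := fun i => v i + if s ≤ i.1 then v (sunshift s i) else 0
  map_add' v w := by funext i; simp only [Pi.add_apply]; split <;> ring
  map_smul' c v := by
    funext i
    simp only [Pi.smul_apply, smul_eq_mul, RingHom.id_apply]
    split <;> ring

lemma sigmaFun_apply {s : ℕ} {F : Type*} [Field F] (v : Fin (2 * s) → F) (i : Fin (2 * s)) :
    sigmaFun s F v i = v i + if i.1 < s then v (sshift s i) else 0 := rfl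

lemma tauFun_apply {s : ℕ} {F : Type*} [Field F] (v : Fin (2 * s) → F) (i : Fin (2 * s)) :
    tauFun s F v i = v i + if s ≤ i.1 then v (sunshift s i) else 0 := rfl

lemma sigma_sigma {s : ℕ} {F : Type*} [Field F] (h2 : (2 : F) = 0) (v : Fin (2 * s) → F) :
    sigmaFun s F (sigmaFun s F v) = v := by
  funext i
  by_cases h : i.1 < s
  · have hns : ¬ (sshift s i).1 < s := by have := sshift_val i h; omega
    simp only [sigmaFun_apply, if_pos h, if_neg hns, add_zero]
    have hzz : v (sshift s i) + v (sshift s i) = 0 := by rw [← two_mul, h2, zero_mul]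
    rw [add_assoc, hzz, add_zero]
  · simp only [sigmaFun_apply, if_neg h, add_zero]

lemma tau_tau {s : ℕ} {F : Type*} [Field F] (h2 : (2 : F) = 0) (v : Fin (2 * s) → F) :
    tauFun s F (tauFun s F v) = v := by
  funext i
  by_cases h : s ≤ i.1
  · have hns : ¬ s ≤ (sunshift s i).1 := by
      simp only [sunshift]
      have := i.isLt; omega
    simp only [tauFun_apply, if_pos h, if_neg hns, add_zero]
    have hzz : v (sunshift s i) + v (sunshift s i) = 0 := by rw [← two_mul, h2, zero_mul]
    rw [add_assoc, hzz, add_zero]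
  · simp only [tauFun_apply, if_neg h, add_zero]

lemma sigma_fixed_high {s : ℕ} {F : Type*} [Field F] {v : Fin (2 * s) → F}
    (h : sigmaFun s F v = v) : ∀ j : Fin (2 * s), s ≤ j.1 → v j = 0 := by
  intro j hj
  have hjlt := j.isLt
  set i : Fin (2 * s) := ⟨j.1 - s, by omega⟩ with hi
  have hilt : i.1 < s := by simp only [hi]; omega
  have hsh : sshift s i = j := by
    apply Fin.ext
    rw [sshift_val i hilt]
    simp only [hi]; omega
  have hci := congrFun h i
  rw [sigmaFun_apply, if_pos hilt, hsh] at hci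
  exact (add_eq_left).mp hci

lemma tau_fixed_low {s : ℕ} {F : Type*} [Field F] {v : Fin (2 * s) → F}
    (h : tauFun s F v = v) : ∀ j : Fin (2 * s), j.1 < s → v j = 0 := by
  intro j hj
  set i : Fin (2 * s) := ⟨j.1 + s, by omega⟩ with hi
  have hile : s ≤ i.1 := by simp only [hi]; omega
  have hsh : sunshift s i = j := by
    apply Fin.ext
    simp only [sunshift, hi]; omega
  have hci := congrFun h i
  rw [tauFun_apply, if_pos hile, hsh] at hci
  exact (add_eq_left).mp hci

/-- There is no self-dual binary code of length `2^(2rs)` (on the coordinate set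
`T = GF(2^r)^(2s)`) invariant under the affine group `T ⋊ SL(2s, GF(2^r))`. -/
theorem no_selfdual_affine_invariant (r s : ℕ) (hr : 0 < r) (hs : 0 < s)
    {F : Type*} [Field F] [Fintype F] (hF : Fintype.card F = 2 ^ r)
    (C : Submodule (ZMod 2) ((Fin (2 * s) → F) → ZMod 2))
    (hT : ∀ t : Fin (2 * s) → F, ∀ x ∈ C, (fun v => x (v + t)) ∈ C)
    (hSL : ∀ A : Matrix.SpecialLinearGroup (Fin (2 * s)) F, ∀ x ∈ C,
      (fun v => x ((A : Matrix (Fin (2*s)) (Fin (2*s)) F).mulVec v)) ∈ C) :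
    dualCode C ≠ C := by
  intro hdual
  classical
  -- The field has characteristic 2.
  have h2 : (2 : F) = 0 := by
    set p := ringChar F with hp
    haveI : CharP F p := ringChar.charP F
    obtain ⟨n, hprime, hcard⟩ := FiniteField.card F p
    have hdvd : p ∣ 2 ^ r := by
      rw [← hF, hcard]; exact dvd_pow_self p n.ne_zero
    have hp2 : p = 2 := by
      have h := Nat.Prime.dvd_of_dvd_pow hprime hdvd
      exact (Nat.prime_dvd_prime_iff_eq hprime Nat.prime_two).mp h
    have := CharP.cast_eq_zero F p
    rw [hp2] at this
    exact_mod_cast this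
  -- Pairing of two codewords vanishes.
  have pairC : ∀ x ∈ C, ∀ y ∈ C, ∑ i, x i * y i = 0 := by
    intro x hx y hy
    rw [← hdual] at hy
    exact hy x hx
  -- The matrices of `sigmaFun` and `tauFun` are in `SL`.
  have detOne : ∀ (f : (Fin (2 * s) → F) →ₗ[F] (Fin (2 * s) → F)),
      (∀ v, f (f v) = v) → (LinearMap.toMatrix' f).det = 1 := by
    intro f hf
    have hcomp : f ∘ₗ f = LinearMap.id := LinearMap.ext hf
    have hMM : LinearMap.toMatrix' f * LinearMap.toMatrix' f = 1 := by
      rw [← LinearMap.toMatrix'_comp, hcomp, LinearMap.toMatrix'_id]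
    have hd : (LinearMap.toMatrix' f).det * (LinearMap.toMatrix' f).det = 1 := by
      rw [← Matrix.det_mul, hMM, Matrix.det_one]
    set d := (LinearMap.toMatrix' f).det with hdd
    have h0 : (d - 1) ^ 2 = 0 := by linear_combination hd + (1 - d) * h2
    have := sq_eq_zero_iff.mp h0
    have := sub_eq_zero.mp this
    exact this
  -- Indicator functions of fixed-point sets of such involutions lie in `C`.
  have key : ∀ (f : (Fin (2 * s) → F) →ₗ[F] (Fin (2 * s) → F)),
      (∀ v, f (f v) = v) →
      (fun v => if f v = v then (1 : ZMod 2) else 0) ∈ C := by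
    intro f hf
    set A : Matrix.SpecialLinearGroup (Fin (2 * s)) F :=
      ⟨LinearMap.toMatrix' f, detOne f hf⟩ with hA
    have hAf : ∀ v, ((A : Matrix (Fin (2*s)) (Fin (2*s)) F).mulVec v) = f v := by
      intro v
      rw [hA]
      show (LinearMap.toMatrix' f).mulVec v = f v
      rw [← Matrix.toLin'_apply, Matrix.toLin'_toMatrix']
    rw [← hdual]
    intro x hx
    have hxf : (fun v => x (f v)) ∈ C := by
      have hmem := hSL A x hx
      have heq : (fun v => x ((A : Matrix (Fin (2*s)) (Fin (2*s)) F).mulVec v))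
          = fun v => x (f v) := funext fun v => by rw [hAf]
      rwa [heq] at hmem
    have hstep : ∑ i, x i * (if f i = i then (1 : ZMod 2) else 0)
        = ∑ i ∈ Finset.univ.filter (fun i => f i = i), x i := by
      rw [Finset.sum_filter]
      apply Finset.sum_congr rfl
      intro i _
      split <;> simp
    rw [hstep, sum_fixed_eq_pairing f hf x]
    exact pairC x hx _ hxf
  have hchi1 := key (sigmaFun s F) (sigma_sigma h2)
  have hchi2 := key (tauFun s F) (tau_tau h2)
  have hzero := pairC _ hchi1 _ hchi2
  -- But the two fixed spaces meet only in `0`, so the pairing is `1`.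
  have hpoint : ∀ v : Fin (2 * s) → F,
      (if sigmaFun s F v = v then (1 : ZMod 2) else 0)
        * (if tauFun s F v = v then (1 : ZMod 2) else 0)
      = if v = 0 then 1 else 0 := by
    intro v
    by_cases h : v = 0
    · subst h
      rw [if_pos (map_zero _), if_pos (map_zero _), if_pos rfl, mul_one]
    · rw [if_neg h]
      by_cases h1 : sigmaFun s F v = v
      · rw [if_pos h1]
        rw [if_neg, mul_zero]
        intro hτ
        apply h
        funext j
        by_cases hj : j.1 < s
        · exact tau_fixed_low hτ j hj
        · exact sigma_fixed_high h1 j (by omega)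
      · rw [if_neg h1, zero_mul]
  rw [Finset.sum_congr rfl (fun v _ => hpoint v)] at hzero
  rw [Finset.sum_ite_eq' Finset.univ (0 : Fin (2 * s) → F) (fun _ => (1 : ZMod 2))] at hzero
  rw [if_pos (Finset.mem_univ _)] at hzero
  exact one_ne_zero hzero
end

section
/- Let G be a permutation group on a finite set Ω and suppose there exist involutions σ, τ ∈ G with |Fix(σ) ∩ Fix(τ)| odd. Then the code C(G,Ω)⊥ = ⟨Fix(ρ) : ρ an involution of G⟩ ⊆ GF(2)^Ω is not self-orthogonal, and hence no self-dual code of length |Ω| invariant under G exists. -/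
lemma sum_mul_comp {Ω : Type*} [Fintype Ω] [DecidableEq Ω] (x : Ω → ZMod 2)
    (ρ : Equiv.Perm Ω) (hρ : ρ ^ 2 = 1) :
    ∑ i, x i * x (ρ i) = ∑ i, x i * fixInd ρ i := by
  have h2 : ρ * ρ = 1 := by rwa [pow_two] at hρ
  have hinv : ∀ a, ρ (ρ a) = a := by
    intro a
    have := DFunLike.congr_fun h2 a
    simpa [Equiv.Perm.mul_apply] using this
  have hR : ∑ i, x i * fixInd ρ i = ∑ i ∈ Finset.univ.filter fun i => ρ i = i, x i := by
    rw [Finset.sum_filter]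
    apply Finset.sum_congr rfl
    intro i _
    by_cases h : ρ i = i <;> simp [fixInd, h]
  rw [hR, ← Finset.sum_filter_add_sum_filter_not Finset.univ (fun i => ρ i = i)
      (fun i => x i * x (ρ i))]
  have hfix : ∑ i ∈ Finset.univ.filter fun i => ρ i = i, x i * x (ρ i)
      = ∑ i ∈ Finset.univ.filter fun i => ρ i = i, x i := by
    apply Finset.sum_congr rfl
    intro i hi
    rw [Finset.mem_filter] at hi
    rw [hi.2, zmod2_mul_self]
  have hnon : ∑ i ∈ Finset.univ.filter fun i => ¬ ρ i = i, x i * x (ρ i) = 0 := by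
    apply Finset.sum_involution (fun a _ => ρ a)
    · intro a _
      rw [hinv a, mul_comm]
      exact CharTwo.add_self_eq_zero _
    · intro a ha _
      rw [Finset.mem_filter] at ha
      exact ha.2
    · intro a ha
      rw [Finset.mem_filter] at ha ⊢
      refine ⟨Finset.mem_univ _, ?_⟩
      rw [hinv a]
      exact fun h => ha.2 h.symm
    · intro a _
      exact hinv a
  rw [hfix, hnon, add_zero]

lemma fix_inner {Ω : Type*} [Fintype Ω] [DecidableEq Ω] (σ τ : Equiv.Perm Ω)
    (hodd : Odd (Finset.univ.filter fun i => σ i = i ∧ τ i = i).card) :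
    ∑ i, fixInd σ i * fixInd τ i = 1 := by
  have : ∑ i, fixInd σ i * fixInd τ i
      = ((Finset.univ.filter fun i => σ i = i ∧ τ i = i).card : ZMod 2) := by
    rw [Finset.card_eq_sum_ones, Nat.cast_sum]
    rw [Finset.sum_filter]
    apply Finset.sum_congr rfl
    intro i _
    by_cases h1 : σ i = i <;> by_cases h2 : τ i = i <;> simp [fixInd, h1, h2]
  rw [this]
  obtain ⟨k, hk⟩ := hodd
  rw [hk]
  push_cast
  ring_nf
  simp [show ((2:ZMod 2)) = 0 from rfl]

lemma mem_dualCode {Ω : Type*} [Fintype Ω] {C : Submodule (ZMod 2) (Ω → ZMod 2)}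
    {y : Ω → ZMod 2} : y ∈ dualCode C ↔ ∀ x ∈ C, ∑ i, x i * y i = 0 := Iff.rfl


/-- If `G` contains involutions `σ`, `τ` with `|Fix(σ) ∩ Fix(τ)|` odd, then
`C(G,Ω)⊥ = ⟨Fix(ρ) : ρ an involution of G⟩` is not self-orthogonal, and no `G`-invariant
self-dual code of length `|Ω|` exists. -/
theorem odd_fix_intersection_no_selfdual {Ω : Type*} [Fintype Ω] [DecidableEq Ω]
    (G : Subgroup (Equiv.Perm Ω)) (σ τ : Equiv.Perm Ω) (hσG : σ ∈ G) (hτG : τ ∈ G)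
    (hσ2 : σ ^ 2 = 1) (hσ1 : σ ≠ 1) (hτ2 : τ ^ 2 = 1) (hτ1 : τ ≠ 1)
    (hodd : Odd (Finset.univ.filter fun i => σ i = i ∧ τ i = i).card) :
    ¬ (Submodule.span (ZMod 2) {v | ∃ ρ ∈ G, ρ ^ 2 = 1 ∧ ρ ≠ 1 ∧ v = fixInd ρ} ≤
        dualCode (Submodule.span (ZMod 2) {v | ∃ ρ ∈ G, ρ ^ 2 = 1 ∧ ρ ≠ 1 ∧ v = fixInd ρ})) ∧
    ∀ B : Submodule (ZMod 2) (Ω → ZMod 2),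
      (∀ g ∈ G, ∀ x ∈ B, (fun i => x (g⁻¹ i)) ∈ B) → dualCode B ≠ B := by
  have hone : (1 : ZMod 2) ≠ 0 := by decide
  constructor
  · intro h
    have hσmem : fixInd σ ∈ Submodule.span (ZMod 2)
        {v | ∃ ρ ∈ G, ρ ^ 2 = 1 ∧ ρ ≠ 1 ∧ v = fixInd ρ} :=
      Submodule.subset_span ⟨σ, hσG, hσ2, hσ1, rfl⟩
    have hτmem : fixInd τ ∈ Submodule.span (ZMod 2)
        {v | ∃ ρ ∈ G, ρ ^ 2 = 1 ∧ ρ ≠ 1 ∧ v = fixInd ρ} :=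
      Submodule.subset_span ⟨τ, hτG, hτ2, hτ1, rfl⟩
    have h0 := mem_dualCode.mp (h hτmem) (fixInd σ) hσmem
    rw [fix_inner σ τ hodd] at h0
    exact hone h0
  · intro B hBinv hBdual
    have key : ∀ ρ ∈ G, ρ ^ 2 = 1 → fixInd ρ ∈ B := by
      intro ρ hρG hρ2
      rw [← hBdual]
      rw [mem_dualCode]
      intro x hx
      rw [← sum_mul_comp x ρ hρ2]
      have h2 : ρ * ρ = 1 := by rwa [pow_two] at hρ2
      have hρinv : ρ⁻¹ = ρ := inv_eq_of_mul_eq_one_right h2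
      have hy : (fun i => x (ρ⁻¹ i)) ∈ B := hBinv ρ hρG x hx
      rw [hρinv] at hy
      rw [← hBdual] at hy
      exact mem_dualCode.mp hy x hx
    have h1 := key σ hσG hσ2
    have h2 := key τ hτG hτ2
    rw [← hBdual] at h2
    have h0 := mem_dualCode.mp h2 (fixInd σ) h1
    rw [fix_inner σ τ hodd] at h0
    exact hone h0
end
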